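/- Let A be an n×n scalar loop matrix whose entries are 2×2 complex matrices and suppose A_{11} = a·1₂ with a ≠ 0. Then the (n−1)×(n−1) matrix B of 2×2 blocks defined by B_{ij} = A_{ij} − A_{i1} A_{11}⁻¹ A_{1j} for 2 ≤ i, j ≤ n is again a scalar loop matrix. -/

import Mathlib

namespace SpinNetworks

noncomputable section

open Matrix BigOperators

/-- Ordered product of the entries of `A` along a path. -/
def pathProd {ι : Type} (A : Matrix ι ι (Matrix (Fin 2) (Fin 2) ℂ)) :
    ι → List ι → Matrix (Fin 2) (Fin 2) ℂ
  | _, [] => 1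
  | i, j :: l => A i j * pathProd A j l

/-- Cyclic weight `W(L)` of the sequence `L = (i, l₁, …, l_k)`. -/
def loopWeight {ι : Type} (A : Matrix ι ι (Matrix (Fin 2) (Fin 2) ℂ)) (i : ι) (l : List ι) :
    Matrix (Fin 2) (Fin 2) ℂ :=
  pathProd A i (l ++ [i])

/-- `A` is a scalar loop matrix: `S(L) = ½(W(L) + W(L⁻¹))` is scalar for every loop `L`. -/
def IsScalarLoop {ι : Type} (A : Matrix ι ι (Matrix (Fin 2) (Fin 2) ℂ)) : Prop :=
  ∀ (i : ι) (l : List ι), ∃ c : ℂ,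
    (2 : ℂ)⁻¹ • (loopWeight A i l + loopWeight A i l.reverse)
      = c • (1 : Matrix (Fin 2) (Fin 2) ℂ)

/- ## Auxiliary material -/

abbrev M2 := Matrix (Fin 2) (Fin 2) ℂ

/-- All boolean lists of length `k`. -/
def boolLists : ℕ → List (List Bool)
  | 0 => [[]]
  | k + 1 => ((boolLists k).map (false :: ·)) ++ ((boolLists k).map (true :: ·))

lemma mem_boolLists : ∀ {k : ℕ} {bs : List Bool}, bs ∈ boolLists k ↔ bs.length = k := by
  intro k
  induction k with
  | zero => intro bs; cases bs <;> simp [boolLists]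
  | succ k ih =>
    intro bs
    cases bs with
    | nil => simp [boolLists]
    | cons b t => cases b <;> simp [boolLists, ih]

lemma nodup_boolLists : ∀ k : ℕ, (boolLists k).Nodup := by
  intro k
  induction k with
  | zero => simp [boolLists]
  | succ k ih =>
    refine List.Nodup.append ?_ ?_ ?_
    · exact ih.map (fun x y h => by simpa using h)
    · exact ih.map (fun x y h => by simpa using h)
    · intro x hx hy
      obtain ⟨u, _, rfl⟩ := List.mem_map.1 hx
      obtain ⟨v, _, hv⟩ := List.mem_map.1 hy
      simp at hv

lemma perm_reverse_boolLists (k : ℕ) :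
    ((boolLists k).map List.reverse).Perm (boolLists k) := by
  refine (List.perm_ext_iff_of_nodup ?_ (nodup_boolLists k)).2 ?_
  · exact (nodup_boolLists k).map (fun x y h => by
      simpa using congrArg List.reverse h)
  · intro bs
    simp only [List.mem_map, mem_boolLists]
    constructor
    · rintro ⟨u, hu, rfl⟩; simpa using hu
    · intro h; exact ⟨bs.reverse, by simpa using h, by simp⟩

/-- Insert `z` в front of each element of the list whose corresponding boolean is `true`. -/
def ins {ι : Type} (z : ι) : List ι → List Bool → List ι
  | [], _ => []
  | j :: l, [] => j :: l
  | j :: l, b :: bs => if b then z :: j :: ins z l bs else j :: ins z l bs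

lemma ins_append {ι : Type} (z : ι) :
    ∀ (p : List ι) (cs : List Bool), cs.length = p.length →
      ∀ (rest : List ι) (cs2 : List Bool),
        ins z (p ++ rest) (cs ++ cs2) = ins z p cs ++ ins z rest cs2 := by
  intro p
  induction p with
  | nil =>
    intro cs hcs rest cs2
    have : cs = [] := List.length_eq_zero_iff.1 hcs
    subst this; simp [ins]
  | cons x t ih =>
    intro cs hcs rest cs2
    cases cs with
    | nil => simp at hcs
    | cons c cs' =>
      simp only [List.length_cons, Nat.succ.injEq] at hcs
      cases c <;> simp [ins, ih cs' hcs rest cs2]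

lemma ins_rev {ι : Type} (z : ι) :
    ∀ (l : List ι) (bs : List Bool) (i j : ι), bs.length = l.length + 1 →
      ∃ m : List ι, ins z (l ++ [j]) bs = m ++ [j] ∧
        ins z (l.reverse ++ [i]) bs.reverse = m.reverse ++ [i] := by
  intro l
  induction l with
  | nil =>
    intro bs i j hbs
    obtain ⟨b, bs', rfl⟩ : ∃ b bs', bs = b :: bs' := by
      cases bs with
      | nil => simp at hbs
      | cons b bs' => exact ⟨b, bs', rfl⟩
    have hb0 : bs'.length = 0 := by simpa using hbs
    have : bs' = [] := List.length_eq_zero_iff.1 hb0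
    subst this
    cases b
    · exact ⟨[], by simp [ins], by simp [ins]⟩
    · exact ⟨[z], by simp [ins], by simp [ins]⟩
  | cons x t ih =>
    intro bs i j hbs
    obtain ⟨b, bs', rfl⟩ : ∃ b bs', bs = b :: bs' := by
      cases bs with
      | nil => simp at hbs
      | cons b bs' => exact ⟨b, bs', rfl⟩
    simp only [List.length_cons, Nat.succ.injEq] at hbs
    obtain ⟨m', h1, h2⟩ := ih bs' x j hbs
    refine ⟨(if b then [z] else []) ++ x :: m', ?_, ?_⟩
    · cases b <;> simp [ins, h1]
    · have hlen : (bs'.reverse).length = (t.reverse ++ [x]).length := by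
        simp [hbs]
      have := ins_append z (t.reverse ++ [x]) bs'.reverse hlen [i] [b]
      have hre : (x :: t).reverse ++ [i] = (t.reverse ++ [x]) ++ [i] := by simp
      have hbre : (b :: bs').reverse = bs'.reverse ++ [b] := by simp
      rw [hre, hbre, this, h2]
      cases b <;> simp [ins]

/-- helper list-sum lemmas -/
lemma list_sum_map_add {α : Type} (L : List α) (f g : α → M2) :
    (L.map f).sum + (L.map g).sum = (L.map fun x => f x + g x).sum := by
  induction L with
  | nil => simp
  | cons x t ih => simp [ih.symm]; abel

lemma list_smul_sum {α : Type} (L : List α) (c : ℂ) (f : α → M2) :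
    c • (L.map f).sum = (L.map fun x => c • f x).sum := by
  induction L with
  | nil => simp
  | cons x t ih => simp [ih.symm, smul_add]

lemma list_sum_smul_one {α : Type} (L : List α) (f : α → ℂ) :
    (L.map fun x => f x • (1 : M2)).sum = ((L.map f).sum) • (1 : M2) := by
  induction L with
  | nil => simp
  | cons x t ih => simp [ih, add_smul]

/-- Expansion of a path product of the rank-one-modified matrix. -/
lemma expand {ι : Type} (A A2 : Matrix ι ι M2) (z : ι) (r : ℂ)
    (h : ∀ i j, A2 i j = A i j + r • (A i z * A z j)) :
    ∀ (l : List ι) (i : ι),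
      pathProd A2 i l
        = ((boolLists l.length).map
            (fun bs => (r ^ (bs.count true)) • pathProd A i (ins z l bs))).sum := by
  intro l
  induction l with
  | nil => intro i; simp [pathProd, boolLists, ins]
  | cons j t ih =>
    intro i
    show A2 i j * pathProd A2 j t = _
    rw [ih j, h i j, add_mul]
    simp only [List.length_cons, boolLists, List.map_append, List.map_map, List.sum_append]
    rw [← List.sum_map_mul_left, ← List.sum_map_mul_left]
    congr 1
    · refine congrArg List.sum (List.map_congr_left fun bs _ => ?_)
      show A i j * (r ^ bs.count true • pathProd A j (ins z t bs))
          = r ^ ((false :: bs).count true) • pathProd A i (ins z (j :: t) (false :: bs))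
      simp only [ins, if_neg Bool.false_ne_true, List.count_cons, if_neg, pathProd]
      rw [mul_smul_comm]
      norm_num
    · refine congrArg List.sum (List.map_congr_left fun bs _ => ?_)
      show (r • (A i z * A z j)) * (r ^ bs.count true • pathProd A j (ins z t bs))
          = r ^ ((true :: bs).count true) • pathProd A i (ins z (j :: t) (true :: bs))
      simp only [ins, if_pos rfl, pathProd]
      rw [smul_mul_assoc, mul_smul_comm, smul_smul, mul_assoc]
      congr 1
      simp [List.count_cons, pow_succ]
      ring

lemma main_aux {ι : Type} (A : Matrix ι ι M2) (z : ι) (r : ℂ) (hA : IsScalarLoop A) :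
    IsScalarLoop (fun i j => A i j + r • (A i z * A z j)) := by
  classical
  intro i l
  have hexp := expand A (fun i j => A i j + r • (A i z * A z j)) z r (fun _ _ => rfl)
  have e1 : loopWeight (fun i j => A i j + r • (A i z * A z j)) i l
      = ((boolLists (l.length + 1)).map
          (fun bs => (r ^ (bs.count true)) • pathProd A i (ins z (l ++ [i]) bs))).sum := by
    unfold loopWeight; rw [hexp]
    simp
  have e2 : loopWeight (fun i j => A i j + r • (A i z * A z j)) i l.reverse
      = ((boolLists (l.length + 1)).map
          (fun bs => (r ^ (bs.count true)) •
            pathProd A i (ins z (l.reverse ++ [i]) bs.reverse))).sum := by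
    unfold loopWeight; rw [hexp]
    have h3 : (boolLists ((l.reverse ++ [i]).length)) = boolLists (l.length + 1) := by simp
    rw [h3]
    have h4 : (boolLists (l.length + 1)).map
        (fun bs => (r ^ (bs.count true)) • pathProd A i (ins z (l.reverse ++ [i]) bs.reverse))
        = ((boolLists (l.length + 1)).map List.reverse).map
            (fun bs => (r ^ (bs.count true)) • pathProd A i (ins z (l.reverse ++ [i]) bs)) := by
      rw [List.map_map]
      refine List.map_congr_left fun bs _ => ?_
      simp [Function.comp, List.count_reverse]
    rw [h4]
    exact (((perm_reverse_boolLists (l.length + 1)).map _).sum_eq).symm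
  refine ⟨((boolLists (l.length + 1)).map
      (fun bs => r ^ (bs.count true) *
        Classical.choose (hA i ((ins z (l ++ [i]) bs).dropLast)))).sum, ?_⟩
  rw [e1, e2, list_sum_map_add, list_smul_sum, ← list_sum_smul_one]
  refine congrArg List.sum (List.map_congr_left fun bs hbs => ?_)
  have hlen : bs.length = l.length + 1 := mem_boolLists.1 hbs
  obtain ⟨m, h1, h2⟩ := ins_rev z l bs i i hlen
  have hm : (ins z (l ++ [i]) bs).dropLast = m := by rw [h1]; simp
  have hc := Classical.choose_spec (hA i m)
  show (2:ℂ)⁻¹ • ((r ^ (bs.count true)) • pathProd A i (ins z (l ++ [i]) bs)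
      + (r ^ (bs.count true)) • pathProd A i (ins z (l.reverse ++ [i]) bs.reverse))
      = (r ^ (bs.count true) *
          Classical.choose (hA i ((ins z (l ++ [i]) bs).dropLast))) • (1 : M2)
  rw [hm, h1, h2, ← smul_add, smul_comm ((2:ℂ)⁻¹)]
  have hW1 : loopWeight A i m = pathProd A i (m ++ [i]) := rfl
  have hW2 : loopWeight A i m.reverse = pathProd A i (m.reverse ++ [i]) := rfl
  rw [← hW1, ← hW2]
  conv_lhs => rw [hc]
  rw [smul_smul]

lemma pathProd_comp {ι κ : Type} (f : ι → κ) (A : Matrix κ κ M2) (B : Matrix ι ι M2)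
    (h : ∀ p q, B p q = A (f p) (f q)) :
    ∀ (i : ι) (l : List ι), pathProd B i l = pathProd A (f i) (l.map f) := by
  intro i l
  induction l generalizing i with
  | nil => rfl
  | cons j t ih => simp only [pathProd, List.map_cons, h, ih]

theorem schurComplement_isScalarLoop {n : ℕ}
    (A : Matrix (Fin (n + 1)) (Fin (n + 1)) (Matrix (Fin 2) (Fin 2) ℂ))
    (hA : IsScalarLoop A) (a : ℂ) (ha : a ≠ 0)
    (h11 : A 0 0 = a • (1 : Matrix (Fin 2) (Fin 2) ℂ)) :
    IsScalarLoop (Matrix.of fun i j : Fin n =>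
      A i.succ j.succ - a⁻¹ • (A i.succ 0 * A 0 j.succ)) := by
  intro i l
  obtain ⟨c, hc⟩ := main_aux A 0 (-a⁻¹) hA i.succ (l.map Fin.succ)
  refine ⟨c, ?_⟩
  have hBA2 : ∀ p q : Fin n,
      (Matrix.of fun i j : Fin n =>
        A i.succ j.succ - a⁻¹ • (A i.succ 0 * A 0 j.succ)) p q
      = (fun i j => A i j + (-a⁻¹) • (A i 0 * A 0 j) : Matrix (Fin (n+1)) (Fin (n+1)) M2)
          p.succ q.succ := by
    intro p q
    simp [sub_eq_add_neg]
  have hpath := pathProd_comp Fin.succ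
    (fun i j => A i j + (-a⁻¹) • (A i 0 * A 0 j))
    (Matrix.of fun i j : Fin n => A i.succ j.succ - a⁻¹ • (A i.succ 0 * A 0 j.succ)) hBA2
  rw [loopWeight, loopWeight, hpath, hpath]
  unfold loopWeight at hc
  simpa [List.map_append, List.map_reverse] using hc

end
end SpinNetworks
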